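/- Let σ > 0, a ∈ ℝ, c ≥ 0, β ≥ 0, let ν be a Borel measure on (0,∞) with ∫₀^∞(1∧z)ν(dz) < ∞ and ∫₁^∞ log(1+z) ν(dz) < ∞, let g : [0,∞) → [0,∞) be a nondecreasing continuous function with g(0) = 0, and take b = a and μ(dz) = σ z^{−2} dz in the generator L (this corresponds to the stable branching mechanism Ψ(λ) = aλ + cλ² + σλ log λ). If liminf_{x→∞} g(x)/(x log x) > σ, then V_log(x) = log(1+x) is a Lyapunov function: there exist constants C₀ > 0 and C₁ > 0 such that LV_log(x) ≤ C₀ − C₁ log(1+x) for all x ≥ 0. -/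

import Mathlib

open MeasureTheory

/-- The Lévy measure `μ(dz) = σ z⁻² dz` on `(0,∞)`, corresponding to the stable
branching mechanism `Ψ(λ) = aλ + cλ² + σλ log λ` (`α = 1`, with `b = a`). -/
noncomputable def muNeveu (σ : ℝ) : Measure ℝ :=
  (volume.restrict (Set.Ioi (0 : ℝ))).withDensity (fun z => ENNReal.ofReal (σ / z ^ 2))

section Helpers
open Set Filter
open scoped ENNReal NNReal Topology

lemma log_one_add_le {v : ℝ} (hv : 0 ≤ v) : Real.log (1 + v) ≤ v := by
  have := Real.log_le_sub_one_of_pos (show (0:ℝ) < 1 + v by linarith)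
  linarith

lemma le_log_one_add {v : ℝ} (hv : 0 ≤ v) : v - v ^ 2 / 2 ≤ Real.log (1 + v) := by
  set F : ℝ → ℝ := fun t => Real.log (1 + t) - t + t ^ 2 / 2 with hF
  have hderiv : ∀ t : ℝ, 0 ≤ t → HasDerivAt F ((1 + t)⁻¹ - 1 + t) t := by
    intro t ht
    have h1 : HasDerivAt (fun s : ℝ => 1 + s) 1 t := by
      simpa using (hasDerivAt_id t).const_add (1 : ℝ)
    have h2 : HasDerivAt (fun s : ℝ => Real.log (1 + s)) ((1 + t)⁻¹ * 1) t :=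
      (Real.hasDerivAt_log (by linarith)).comp t h1
    have h3 : HasDerivAt (fun s : ℝ => s ^ 2 / 2) ((2 : ℕ) * t ^ 1 / 2) t :=
      (hasDerivAt_pow 2 t).div_const 2
    have h4 : HasDerivAt F ((1 + t)⁻¹ * 1 - 1 + ((2 : ℕ) : ℝ) * t ^ 1 / 2) t :=
      (h2.sub (hasDerivAt_id t)).add h3
    convert h4 using 1
    push_cast
    ring
  have hmono : MonotoneOn F (Ici 0) := by
    apply monotoneOn_of_deriv_nonneg (convex_Ici 0)
    · exact fun t ht => ((hderiv t ht).continuousAt).continuousWithinAt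
    · intro t ht
      rw [interior_Ici] at ht
      exact ((hderiv t ht.le).differentiableAt).differentiableWithinAt
    · intro t ht
      rw [interior_Ici] at ht
      rw [(hderiv t ht.le).deriv]
      have hpos : (0:ℝ) < 1 + t := by linarith [(show (0:ℝ) < t from ht).le]
      have key : 1 - t ≤ (1 + t)⁻¹ := by
        rw [inv_eq_one_div, le_div_iff₀ hpos]
        nlinarith [sq_nonneg t]
      linarith
  have h0 : F 0 = 0 := by simp [hF]
  have := hmono (self_mem_Ici) (show v ∈ Ici (0:ℝ) from hv) hv
  rw [h0] at this
  simp only [hF] at this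
  nlinarith [this]

lemma xlogx_lb {x : ℝ} (hx : 3 ≤ x) :
    (1 + x) * (Real.log (1 + x) - 3) ≤ x * Real.log x := by
  have hx0 : (0:ℝ) < x := by linarith
  have hinv : 1 / x ≤ 1 := by
    rw [div_le_one hx0]; linarith
  have hinv0 : 0 ≤ 1 / x := by positivity
  have hxx : x * (1 / x) = 1 := by field_simp
  have h1 : Real.log (1 + x) ≤ Real.log x + 1 / x := by
    have he : (1 + x) = x * (1 + 1 / x) := by field_simp; ring
    rw [he, Real.log_mul (ne_of_gt hx0) (by positivity)]
    have := log_one_add_le hinv0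
    linarith
  have hlogx : Real.log x ≤ x - 1 := Real.log_le_sub_one_of_pos hx0
  nlinarith [mul_le_mul_of_nonneg_left h1 (show (0:ℝ) ≤ 1 + x by linarith)]

lemma mu_integral_le (σ : ℝ) (hσ : 0 < σ) (u : ℝ) (hu : 1 ≤ u) :
    ∫ z in Set.Ioi (0:ℝ),
      (Real.log (1 + z / u) - (z / u) * (if z ≤ 1 then 1 else 0)) ∂(muNeveu σ)
    ≤ (σ * Real.log u + σ * (1 + Real.log 2)) / u := by
  have hu0 : (0:ℝ) < u := lt_of_lt_of_le one_pos hu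
  set f : ℝ → ℝ := fun z => Real.log (1 + z / u) - (z / u) * (if z ≤ 1 then 1 else 0)
    with hf
  set w : ℝ → ℝ := fun z => σ / z ^ 2 * f z with hwdef
  -- measurability
  have hfm : Measurable f := by
    apply Measurable.sub
    · exact (Real.measurable_log.comp (measurable_const.add (measurable_id.div_const u)))
    · exact (measurable_id.div_const u).mul
        (Measurable.ite measurableSet_Iic measurable_const measurable_const)
  have hwm : Measurable w := (measurable_const.div (measurable_id.pow_const 2)).mul hfm
  -- step 1: rewrite the integral against Lebesgue measure
  have hstep1 : ∫ z in Set.Ioi (0:ℝ), f z ∂(muNeveu σ) = ∫ z in Set.Ioi (0:ℝ), w z := by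
    have hμ : (muNeveu σ).restrict (Set.Ioi 0) = muNeveu σ := by
      rw [muNeveu, restrict_withDensity measurableSet_Ioi,
        Measure.restrict_restrict measurableSet_Ioi, Set.inter_self]
    have hd : muNeveu σ
        = (volume.restrict (Set.Ioi (0:ℝ))).withDensity
            (fun z => ((σ / z ^ 2).toNNReal : ℝ≥0∞)) := rfl
    have hmeasd : Measurable fun z : ℝ => (σ / z ^ 2).toNNReal :=
      (measurable_const.div (measurable_id.pow_const 2)).real_toNNReal
    calc ∫ z in Set.Ioi (0:ℝ), f z ∂(muNeveu σ)
        = ∫ z, f z ∂(muNeveu σ) := by rw [hμ]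
      _ = ∫ z, ((σ / z ^ 2).toNNReal : ℝ≥0) • f z ∂(volume.restrict (Set.Ioi 0)) := by
          rw [hd, integral_withDensity_eq_integral_smul hmeasd]
      _ = ∫ z in Set.Ioi (0:ℝ), w z := by
          apply setIntegral_congr_fun measurableSet_Ioi
          intro z hz
          show (σ / z ^ 2).toNNReal • f z = σ / z ^ 2 * f z
          rw [NNReal.smul_def, smul_eq_mul, Real.coe_toNNReal _ (by positivity)]
  rw [hstep1]
  set a₀ : ℝ := Real.log 2 - Real.log u with ha₀
  set W : ℝ → ℝ := fun z => if z ≤ u then σ / (u * z) else σ * (a₀ + Real.log z) / z ^ 2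
    with hW
  have hWm : Measurable W := by
    apply Measurable.ite measurableSet_Iic
    · exact measurable_const.div (measurable_id.const_mul u)
    · exact ((measurable_const.add Real.measurable_log).const_mul σ).div
        (measurable_id.pow_const 2)
  -- bound on (0,1]
  have hbound1 : ∀ z ∈ Ioc (0:ℝ) 1, ‖w z‖ ≤ σ / 2 := by
    intro z hz
    have hz0 : 0 < z := hz.1
    have hv0 : 0 ≤ z / u := by positivity
    have hfz : f z = Real.log (1 + z / u) - z / u := by simp [hf, if_pos hz.2]
    have h1 := log_one_add_le hv0
    have h2 := le_log_one_add hv0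
    have habs : |f z| ≤ (z / u) ^ 2 / 2 := by
      rw [hfz, abs_le]; constructor <;> nlinarith
    have hzu : z / u ≤ z := div_le_self hz0.le hu
    have h3 : (z / u) ^ 2 ≤ z ^ 2 := by nlinarith
    have hnw : ‖w z‖ = σ / z ^ 2 * |f z| := by
      rw [hwdef, Real.norm_eq_abs, abs_mul,
        abs_of_nonneg (by positivity : (0:ℝ) ≤ σ / z ^ 2)]
    rw [hnw]
    calc σ / z ^ 2 * |f z| ≤ σ / z ^ 2 * (z ^ 2 / 2) := by
          refine mul_le_mul_of_nonneg_left ?_ (by positivity)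
          exact le_trans habs (by nlinarith)
      _ = σ / 2 := by field_simp
  have hInt1 : IntegrableOn w (Ioc 0 1) volume := by
    apply Measure.integrableOn_of_bounded measure_Ioc_lt_top.ne hwm.aestronglyMeasurable
    exact (ae_restrict_iff' measurableSet_Ioc).2 (ae_of_all _ hbound1)
  -- pointwise facts on (1,∞)
  have hfz' : ∀ z : ℝ, 1 < z → f z = Real.log (1 + z / u) := by
    intro z hz; simp [hf, if_neg (not_le.2 hz)]
  have hWw : ∀ z ∈ Ioi (1:ℝ), w z ≤ W z := by
    intro z hz
    have hz1 : (1:ℝ) < z := hz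
    have hz0 : (0:ℝ) < z := lt_trans one_pos hz1
    rw [hwdef]
    dsimp only
    rw [hfz' z hz1, hW]
    dsimp only
    by_cases hcase : z ≤ u
    · rw [if_pos hcase]
      have hlog : Real.log (1 + z / u) ≤ z / u := log_one_add_le (by positivity)
      calc σ / z ^ 2 * Real.log (1 + z / u) ≤ σ / z ^ 2 * (z / u) :=
            mul_le_mul_of_nonneg_left hlog (by positivity)
        _ = σ / (u * z) := by field_simp
    · rw [if_neg hcase]
      push_neg at hcase
      have hlog : Real.log (1 + z / u) ≤ a₀ + Real.log z := by
        have h2 : (1 : ℝ) + z / u ≤ 2 * (z / u) := by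
          have : 1 ≤ z / u := (le_div_iff₀ hu0).2 (by linarith)
          linarith
        have h3 := Real.log_le_log (by positivity) h2
        rw [Real.log_mul two_ne_zero (by positivity),
          Real.log_div (ne_of_gt hz0) (ne_of_gt hu0)] at h3
        rw [ha₀]; linarith
      calc σ / z ^ 2 * Real.log (1 + z / u) ≤ σ / z ^ 2 * (a₀ + Real.log z) :=
            mul_le_mul_of_nonneg_left hlog (by positivity)
        _ = σ * (a₀ + Real.log z) / z ^ 2 := by ring
  have hw0 : ∀ z ∈ Ioi (1:ℝ), 0 ≤ w z := by
    intro z hz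
    have hz0 : (0:ℝ) < z := lt_trans one_pos hz
    rw [hwdef]
    dsimp only
    rw [hfz' z hz]
    have : (0:ℝ) < z / u := by positivity
    exact mul_nonneg (by positivity) (Real.log_nonneg (by linarith))
  -- integrability of W on (1, u]
  have hWIoc : IntegrableOn W (Ioc 1 u) volume := by
    apply Measure.integrableOn_of_bounded (M := σ) measure_Ioc_lt_top.ne hWm.aestronglyMeasurable
    refine (ae_restrict_iff' measurableSet_Ioc).2 (ae_of_all _ ?_)
    intro z hz
    have hz0 : (0:ℝ) < z := lt_trans one_pos hz.1
    rw [hW]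
    dsimp only
    rw [if_pos hz.2, Real.norm_eq_abs, abs_of_nonneg (by positivity),
      div_le_iff₀ (by positivity : (0:ℝ) < u * z)]
    nlinarith [hz.1, hu, mul_le_mul hu hz.1.le zero_le_one hu0.le]
  -- integrability and value of W on (u, ∞) via FTC
  have hderivG : ∀ z ∈ Ici u, HasDerivAt (fun y => -(σ * (a₀ + Real.log y + 1) / y))
      ((fun y => σ * (a₀ + Real.log y) / y ^ 2) z) z := by
    intro z hz
    have hz0 : (0:ℝ) < z := lt_of_lt_of_le hu0 hz
    have h1 : HasDerivAt (fun y : ℝ => a₀ + Real.log y + 1) z⁻¹ z :=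
      ((Real.hasDerivAt_log (ne_of_gt hz0)).const_add a₀).add_const 1
    have h2 : HasDerivAt (fun y : ℝ => σ * (a₀ + Real.log y + 1)) (σ * z⁻¹) z :=
      h1.const_mul σ
    have h3 : HasDerivAt (fun y => -(σ * (a₀ + Real.log y + 1) / y))
        (-((σ * z⁻¹ * z - σ * (a₀ + Real.log z + 1) * 1) / z ^ 2)) z :=
      (h2.div (hasDerivAt_id z) (ne_of_gt hz0)).neg
    convert h3 using 1
    field_simp
    ring
  have hposG : ∀ z ∈ Ioi u, 0 ≤ (fun y => σ * (a₀ + Real.log y) / y ^ 2) z := by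
    intro z hz
    have hz0 : (0:ℝ) < z := lt_trans hu0 hz
    have hlu : Real.log u ≤ Real.log z := Real.log_le_log hu0 (le_of_lt hz)
    have h2 : 0 < Real.log 2 := Real.log_pos one_lt_two
    have h3 : 0 ≤ a₀ + Real.log z := by rw [ha₀]; linarith
    positivity
  have htend : Tendsto (fun y : ℝ => -(σ * (a₀ + Real.log y + 1) / y)) atTop (𝓝 0) := by
    have l1 : Tendsto (fun y : ℝ => Real.log y / y) atTop (𝓝 0) :=
      Real.isLittleO_log_id_atTop.tendsto_div_nhds_zero
    have l2 : Tendsto (fun y : ℝ => σ * (a₀ + 1) / y) atTop (𝓝 (0:ℝ)) :=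
      tendsto_const_nhds.div_atTop tendsto_id
    have l3 := (l2.add (l1.const_mul σ)).neg
    simp only [add_zero, mul_zero, neg_zero] at l3
    refine l3.congr fun y => by ring
  have hWIoi : IntegrableOn W (Ioi u) volume := by
    have hI : IntegrableOn (fun y => σ * (a₀ + Real.log y) / y ^ 2) (Ioi u) volume :=
      integrableOn_Ioi_deriv_of_nonneg' hderivG hposG htend
    refine hI.congr_fun (fun z hz => ?_) measurableSet_Ioi
    rw [hW]
    dsimp only
    rw [if_neg (not_le.2 hz)]
  have hIntW : IntegrableOn W (Ioi 1) volume := by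
    rw [← Ioc_union_Ioi_eq_Ioi hu]
    exact hWIoc.union hWIoi
  have hInt2 : IntegrableOn w (Ioi 1) volume := by
    apply Integrable.mono hIntW hwm.aestronglyMeasurable
    refine (ae_restrict_iff' measurableSet_Ioi).2 (ae_of_all _ ?_)
    intro z hz
    rw [Real.norm_eq_abs, Real.norm_eq_abs, abs_of_nonneg (hw0 z hz)]
    exact le_trans (hWw z hz) (le_abs_self _)
  have hsplit : ∫ z in Ioi (0:ℝ), w z = (∫ z in Ioc (0:ℝ) 1, w z) + ∫ z in Ioi (1:ℝ), w z := by
    rw [← Ioc_union_Ioi_eq_Ioi zero_le_one,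
      setIntegral_union (Ioc_disjoint_Ioi le_rfl) measurableSet_Ioi hInt1 hInt2]
  rw [hsplit]
  have hneg : ∫ z in Ioc (0:ℝ) 1, w z ≤ 0 := by
    apply setIntegral_nonpos measurableSet_Ioc
    intro z hz
    have hz0 : 0 < z := hz.1
    have hv0 : 0 ≤ z / u := by positivity
    have hfz : f z = Real.log (1 + z / u) - z / u := by simp [hf, if_pos hz.2]
    have h1 := log_one_add_le hv0
    exact mul_nonpos_iff.2 (Or.inl ⟨by positivity, by rw [hfz]; linarith⟩)
  have hmono : ∫ z in Ioi (1:ℝ), w z ≤ ∫ z in Ioi (1:ℝ), W z :=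
    setIntegral_mono_on hInt2 hIntW measurableSet_Ioi hWw
  have hWval : ∫ z in Ioi (1:ℝ), W z = σ * Real.log u / u + σ * (Real.log 2 + 1) / u := by
    rw [← Ioc_union_Ioi_eq_Ioi hu,
      setIntegral_union (Ioc_disjoint_Ioi le_rfl) measurableSet_Ioi hWIoc hWIoi]
    have hA : ∫ z in Ioc (1:ℝ) u, W z = σ * Real.log u / u := by
      have he : EqOn W (fun z => σ / u * z⁻¹) (Ioc 1 u) := by
        intro z hz
        have hz0 : (0:ℝ) < z := lt_trans one_pos hz.1
        rw [hW]
        dsimp only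
        rw [if_pos hz.2]
        field_simp
      rw [setIntegral_congr_fun measurableSet_Ioc he, MeasureTheory.integral_const_mul,
        ← intervalIntegral.integral_of_le hu, integral_inv (by
          rw [Set.uIcc_of_le hu]
          intro hmem
          exact absurd hmem.1 (by norm_num))]
      rw [div_one]
      ring
    have hB : ∫ z in Ioi u, W z = σ * (Real.log 2 + 1) / u := by
      have he : EqOn (fun y => σ * (a₀ + Real.log y) / y ^ 2) W (Ioi u) := by
        intro z hz
        rw [hW]
        dsimp only
        rw [if_neg (not_le.2 hz)]
      rw [← setIntegral_congr_fun measurableSet_Ioi he,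
        integral_Ioi_of_hasDerivAt_of_nonneg' hderivG hposG htend]
      rw [zero_sub, neg_neg, ha₀]
      ring
    rw [hA, hB]
  have hfin : σ * Real.log u / u + σ * (Real.log 2 + 1) / u
      = (σ * Real.log u + σ * (1 + Real.log 2)) / u := by ring
  linarith [hneg, hmono, hWval.le, hWval.ge]

lemma nu_integral_le (ν : Measure ℝ)
    (hνloc : ∫⁻ z, ENNReal.ofReal (min 1 z) ∂ν < ⊤)
    (hνlog : ∫⁻ z in Set.Ioi (1 : ℝ), ENNReal.ofReal (Real.log (1 + z)) ∂ν < ⊤) :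
    ∃ K : ℝ, 0 ≤ K ∧ ∀ u : ℝ, 1 ≤ u →
      ∫ z in Set.Ioi (0:ℝ), Real.log (1 + z / u) ∂ν ≤ K := by
  set Λ : ℝ≥0∞ := (∫⁻ z, ENNReal.ofReal (min 1 z) ∂ν)
    + ∫⁻ z in Set.Ioi (1 : ℝ), ENNReal.ofReal (Real.log (1 + z)) ∂ν with hΛdef
  have hΛ : Λ ≠ ⊤ := by
    rw [hΛdef]
    exact (ENNReal.add_lt_top.2 ⟨hνloc, hνlog⟩).ne
  refine ⟨Λ.toReal, ENNReal.toReal_nonneg, fun u hu => ?_⟩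
  have hu0 : (0:ℝ) < u := lt_of_lt_of_le one_pos hu
  have hmeas : AEStronglyMeasurable (fun z : ℝ => Real.log (1 + z / u))
      (ν.restrict (Set.Ioi 0)) :=
    ((Real.measurable_log.comp (measurable_const.add
      (measurable_id.div_const u)))).aestronglyMeasurable
  have hnn : 0 ≤ᵐ[ν.restrict (Set.Ioi 0)] fun z : ℝ => Real.log (1 + z / u) := by
    refine (ae_restrict_iff' measurableSet_Ioi).2 (ae_of_all _ ?_)
    intro z hz
    have : (0:ℝ) < z / u := div_pos hz hu0
    exact Real.log_nonneg (by linarith)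
  rw [integral_eq_lintegral_of_nonneg_ae hnn hmeas]
  have hle : (∫⁻ z in Set.Ioi (0:ℝ), ENNReal.ofReal (Real.log (1 + z / u)) ∂ν) ≤ Λ := by
    have hstep : (∫⁻ z in Set.Ioi (0:ℝ), ENNReal.ofReal (Real.log (1 + z / u)) ∂ν)
        ≤ ∫⁻ z in Set.Ioi (0:ℝ),
            (ENNReal.ofReal (min 1 z)
              + (Set.Ioi (1:ℝ)).indicator (fun z => ENNReal.ofReal (Real.log (1 + z))) z) ∂ν := by
      refine setLIntegral_mono (by
        apply Measurable.fun_add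
        · exact (measurable_const.min measurable_id).ennreal_ofReal
        · exact Measurable.indicator
            ((Real.measurable_log.comp (measurable_const.add measurable_id)).ennreal_ofReal)
            measurableSet_Ioi) ?_
      intro z hz
      have hz0 : (0:ℝ) < z := hz
      have hmono : Real.log (1 + z / u) ≤ Real.log (1 + z) := by
        apply Real.log_le_log (by positivity)
        have : z / u ≤ z := div_le_self hz0.le hu
        linarith
      by_cases h1 : z ≤ 1
      · have h2 : Real.log (1 + z) ≤ z := log_one_add_le hz0.le
        have h3 : min 1 z = z := min_eq_right h1
        calc ENNReal.ofReal (Real.log (1 + z / u))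
            ≤ ENNReal.ofReal (min 1 z) := by
              rw [h3]; exact ENNReal.ofReal_le_ofReal (le_trans hmono h2)
          _ ≤ _ := le_self_add
      · push_neg at h1
        calc ENNReal.ofReal (Real.log (1 + z / u))
            ≤ (Set.Ioi (1:ℝ)).indicator (fun z => ENNReal.ofReal (Real.log (1 + z))) z := by
              rw [Set.indicator_of_mem (show z ∈ Set.Ioi 1 from h1)]
              exact ENNReal.ofReal_le_ofReal hmono
          _ ≤ _ := le_add_self
    refine le_trans hstep ?_
    rw [lintegral_add_left (show Measurable fun z : ℝ => ENNReal.ofReal (min 1 z) from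
      (measurable_const.min measurable_id).ennreal_ofReal)]
    rw [hΛdef]
    apply add_le_add
    · exact setLIntegral_le_lintegral _ _
    · rw [lintegral_indicator measurableSet_Ioi _,
        Measure.restrict_restrict measurableSet_Ioi,
        Set.inter_eq_left.2 (Set.Ioi_subset_Ioi zero_le_one)]
  exact ENNReal.toReal_mono hΛ hle

end Helpers

open Set Filter in
open scoped ENNReal Topology in
/- Corollary 1.5 of Li–Li–Wang–Zhou, Lyapunov part for `α = 1`. -/
theorem lyapunov_Vlog_neveu
    (σ a c β : ℝ) (hσ : 0 < σ) (hc : 0 ≤ c) (hβ : 0 ≤ β)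
    (ν : Measure ℝ) (hνsupp : ν (Set.Iic 0) = 0)
    (hνloc : ∫⁻ z, ENNReal.ofReal (min 1 z) ∂ν < ⊤)
    (hνlog : ∫⁻ z in Set.Ioi (1 : ℝ), ENNReal.ofReal (Real.log (1 + z)) ∂ν < ⊤)
    (g : ℝ → ℝ) (hg0 : g 0 = 0) (hgmono : MonotoneOn g (Set.Ici 0))
    (hgcont : ContinuousOn g (Set.Ici 0)) (hgnonneg : ∀ x ∈ Set.Ici (0 : ℝ), 0 ≤ g x)
    (hliminf : (σ : EReal) < Filter.liminf
      (fun x : ℝ => ((g x / (x * Real.log x) : ℝ) : EReal)) Filter.atTop) :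
    ∃ C₀ > (0 : ℝ), ∃ C₁ > (0 : ℝ), ∀ x : ℝ, 0 ≤ x →
      -c / (1 + x) ^ 2
          + x * (∫ z in Set.Ioi (0 : ℝ),
              (Real.log (1 + z / (1 + x))
                - (z / (1 + x)) * (if z ≤ 1 then 1 else 0)) ∂(muNeveu σ))
          + (β - a * x - g x) / (1 + x)
          + (∫ z in Set.Ioi (0 : ℝ), Real.log (1 + z / (1 + x)) ∂ν)
        ≤ C₀ - C₁ * Real.log (1 + x) := by
  obtain ⟨K, hK0, hK⟩ := nu_integral_le ν hνloc hνlog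
  obtain ⟨θE, hθ1, hθ2⟩ := exists_between hliminf
  have hθtop : θE ≠ ⊤ := (lt_of_lt_of_le hθ2 le_top).ne
  have hθbot : θE ≠ ⊥ := by
    intro h
    rw [h] at hθ1
    exact (EReal.bot_lt_coe σ).not_gt hθ1
  set θ : ℝ := θE.toReal with hθdef
  have hθE : θE = (θ : EReal) := (EReal.coe_toReal hθtop hθbot).symm
  have hσθ : σ < θ := by
    rw [hθE] at hθ1
    exact_mod_cast hθ1
  clear_value θ
  have hθ0 : 0 < θ := lt_trans hσ hσθ
  have hev : ∀ᶠ x in atTop, (θ : EReal) < ((g x / (x * Real.log x) : ℝ) : EReal) := by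
    rw [← hθE]
    exact Filter.eventually_lt_of_lt_liminf hθ2
  obtain ⟨M, hM⟩ := Filter.eventually_atTop.mp hev
  clear hev hθ1 hθ2 hθtop hθbot hθE hliminf hθdef θE
  set M₀ : ℝ := max M 3 with hM₀
  have hM₀3 : (3:ℝ) ≤ M₀ := le_max_right M 3
  have hMM₀ : M ≤ M₀ := le_max_left M 3
  clear_value M₀
  have hlog2 : (0:ℝ) < Real.log 2 := Real.log_pos one_lt_two
  set A : ℝ := σ * (1 + Real.log 2) + β + |a| + K with hA
  clear_value A
  have hA0 : 0 ≤ A := by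
    have := abs_nonneg a
    rw [hA]
    nlinarith
  set C₁ : ℝ := θ - σ with hC₁
  clear_value C₁
  have hC₁0 : 0 < C₁ := by rw [hC₁]; linarith
  set LM : ℝ := Real.log (1 + M₀) with hLM
  clear_value LM
  have hLM0 : 0 ≤ LM := by rw [hLM]; exact Real.log_nonneg (by linarith)
  set C₀ : ℝ := A + 3 * θ + (σ + C₁) * LM + 1 with hC₀
  clear_value C₀
  have hσC₁ : σ + C₁ = θ := by rw [hC₁]; ring
  have hprod : 0 ≤ (σ + C₁) * LM := mul_nonneg (by linarith) hLM0
  refine ⟨C₀, by rw [hC₀]; nlinarith, C₁, hC₁0, ?_⟩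
  intro x hx
  set u : ℝ := 1 + x with hu
  clear_value u
  have hu1 : (1:ℝ) ≤ u := by rw [hu]; linarith
  have hu0 : (0:ℝ) < u := by linarith
  have hlogu0 : 0 ≤ Real.log u := Real.log_nonneg hu1
  have hT1 : -c / u ^ 2 ≤ 0 := by
    have h1 : 0 ≤ c / u ^ 2 := by positivity
    have h2 : -c / u ^ 2 = -(c / u ^ 2) := by ring
    linarith
  have hT2 : x * (∫ z in Set.Ioi (0 : ℝ),
        (Real.log (1 + z / u) - (z / u) * (if z ≤ 1 then 1 else 0)) ∂(muNeveu σ))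
      ≤ σ * Real.log u + σ * (1 + Real.log 2) := by
    have hJ := mu_integral_le σ hσ u hu1
    have hB0 : 0 ≤ σ * Real.log u + σ * (1 + Real.log 2) := by nlinarith
    calc x * (∫ z in Set.Ioi (0 : ℝ),
          (Real.log (1 + z / u) - (z / u) * (if z ≤ 1 then 1 else 0)) ∂(muNeveu σ))
        ≤ x * ((σ * Real.log u + σ * (1 + Real.log 2)) / u) :=
          mul_le_mul_of_nonneg_left hJ hx
      _ ≤ u * ((σ * Real.log u + σ * (1 + Real.log 2)) / u) :=
          mul_le_mul_of_nonneg_right (by rw [hu]; linarith) (div_nonneg hB0 hu0.le)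
      _ = σ * Real.log u + σ * (1 + Real.log 2) := by
          rw [mul_comm, div_mul_cancel₀ _ hu0.ne']
  have hT4 : (∫ z in Set.Ioi (0 : ℝ), Real.log (1 + z / u) ∂ν) ≤ K := hK u hu1
  have hgx : 0 ≤ g x := hgnonneg x hx
  have hT3 : (β - a * x - g x) / u ≤ β + |a| - g x / u := by
    have hsplit : (β - a * x - g x) / u = β / u - a * x / u - g x / u := by ring
    have h1 : β / u ≤ β := div_le_self hβ hu1
    have habs : |a * x / u| ≤ |a| := by
      rw [abs_div, abs_mul, abs_of_pos hu0, abs_of_nonneg hx, div_le_iff₀ hu0]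
      nlinarith [abs_nonneg a]
    have h2 := (abs_le.1 habs).1
    rw [hsplit]
    linarith
  have htotal : -c / u ^ 2
      + x * (∫ z in Set.Ioi (0 : ℝ),
          (Real.log (1 + z / u) - (z / u) * (if z ≤ 1 then 1 else 0)) ∂(muNeveu σ))
      + (β - a * x - g x) / u
      + (∫ z in Set.Ioi (0 : ℝ), Real.log (1 + z / u) ∂ν)
      ≤ A + σ * Real.log u - g x / u := by
    rw [hA]
    linarith
  refine le_trans htotal ?_
  clear htotal hT1 hT2 hT3 hT4 hK hνloc hνlog hνsupp hgcont hgmono hg0 hgnonneg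
  by_cases hcase : M₀ ≤ x
  · have hx3 : (3:ℝ) ≤ x := le_trans hM₀3 hcase
    have hxM : M ≤ x := le_trans hMM₀ hcase
    have hgb : (θ : EReal) < ((g x / (x * Real.log x) : ℝ) : EReal) := hM x hxM
    have hgb' : θ < g x / (x * Real.log x) := by exact_mod_cast hgb
    clear hgb
    have hxlog : 0 < x * Real.log x :=
      mul_pos (by linarith) (Real.log_pos (by linarith))
    have hgb2 : θ * (x * Real.log x) < g x := (lt_div_iff₀ hxlog).1 hgb'
    have hxl := xlogx_lb hx3
    have hgb3 : θ * ((1 + x) * (Real.log (1 + x) - 3)) ≤ g x := by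
      have := mul_le_mul_of_nonneg_left hxl hθ0.le
      linarith
    have hgu : θ * (Real.log u - 3) ≤ g x / u := by
      rw [le_div_iff₀ hu0]
      calc θ * (Real.log u - 3) * u = θ * (u * (Real.log u - 3)) := by ring
        _ ≤ g x := by rw [hu]; exact hgb3
    have hC₁' : C₁ * Real.log u = θ * Real.log u - σ * Real.log u := by rw [hC₁]; ring
    have hexp : θ * (Real.log u - 3) = θ * Real.log u - 3 * θ := by ring
    have hkey : A + σ * Real.log u - g x / u ≤ A + 3 * θ - C₁ * Real.log u := by
      linarith
    refine le_trans hkey ?_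
    have hfin : A + 3 * θ ≤ C₀ := by rw [hC₀]; linarith
    linarith
  · push_neg at hcase
    have hgu : 0 ≤ g x / u := div_nonneg hgx hu0.le
    have hlogle : Real.log u ≤ LM := by
      rw [hLM]
      apply Real.log_le_log hu0
      rw [hu]
      linarith
    have h1 : (σ + C₁) * Real.log u ≤ (σ + C₁) * LM :=
      mul_le_mul_of_nonneg_left hlogle (by linarith)
    have hexp2 : (σ + C₁) * Real.log u = σ * Real.log u + C₁ * Real.log u := by ring
    have hexp3 : (σ + C₁) * LM = σ * LM + C₁ * LM := by ring
    have h2 : A + σ * Real.log u - g x / u ≤ C₀ - C₁ * Real.log u := by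
      rw [hC₀]
      linarith
    exact h2
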